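/- Dynamic bias of the static fixed-effects estimator (Theorem 'Dynamic Bias'): the population least-squares coefficient of the within-transformed static regression satisfies (Σ_{t=1}^{T} Cov(D̃_t, Y_t)) / (Σ_{t=1}^{T} Var(D̃_t)) = τ₀ − (ρ₁₀·τ₀/(T·(T-1)))·Σ_{t=1}^{T} Σ_{s=1}^{t-1} ρ₁₀^{t-s-1}, which is the probability limit of the OLS treatment-effect estimator in the static model omitting the lagged outcome. -/

import Mathlib

open Finset MeasureTheory ProbabilityTheory

/-- Covariance of two real random variables with respect to `μ`. -/
noncomputable def cov {Ω : Type*} [MeasurableSpace Ω] (μ : Measure Ω)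
    (X Z : Ω → ℝ) : ℝ :=
  ∫ ω, (X ω - ∫ x, X x ∂μ) * (Z ω - ∫ x, Z x ∂μ) ∂μ

/-- Variance of a real random variable with respect to `μ`. -/
noncomputable def var {Ω : Type*} [MeasurableSpace Ω] (μ : Measure Ω)
    (X : Ω → ℝ) : ℝ :=
  cov μ X X

private lemma l2_mul_int {Ω : Type*} [MeasurableSpace Ω] {μ : Measure Ω}
    {f g : Ω → ℝ} (hf : MemLp f 2 μ) (hg : MemLp g 2 μ) :
    Integrable (fun ω => f ω * g ω) μ := by
  have h1 := (hf.add hg).integrable_sq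
  have h2 := hf.integrable_sq
  have h3 := hg.integrable_sq
  have h4 := ((h1.sub h2).sub h3).div_const 2
  refine h4.congr (Filter.Eventually.of_forall fun ω => ?_)
  simp only [Pi.sub_apply, Pi.add_apply]
  ring

private lemma cov_eq_integral {Ω : Type*} [MeasurableSpace Ω] (μ : Measure Ω)
    [IsProbabilityMeasure μ] {X Z : Ω → ℝ}
    (hX : MemLp X 2 μ) (hZ : MemLp Z 2 μ) (hXm : ∫ ω, X ω ∂μ = 0) :
    cov μ X Z = ∫ ω, X ω * Z ω ∂μ := by
  unfold cov
  rw [hXm]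
  have hXi := hX.integrable one_le_two
  have h1 : ∀ ω, (X ω - 0) * (Z ω - ∫ x, Z x ∂μ)
      = X ω * Z ω - (∫ x, Z x ∂μ) * X ω := fun ω => by ring
  simp_rw [h1]
  rw [integral_sub (l2_mul_int hX hZ) (hXi.const_mul _), integral_const_mul, hXm,
    mul_zero, sub_zero]

private lemma cov_const_add {Ω : Type*} [MeasurableSpace Ω] (μ : Measure Ω)
    [IsProbabilityMeasure μ] {X Z : Ω → ℝ} (A : ℝ) (hZ : Integrable Z μ) :
    cov μ X (fun ω => A + Z ω) = cov μ X Z := by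
  unfold cov
  rw [integral_add (integrable_const A) hZ, integral_const, probReal_univ,
    smul_eq_mul, one_mul]
  simp_rw [add_sub_add_left_eq_sub]

/-- Dynamic bias of the static fixed-effects estimator (Theorem "Dynamic Bias"): the population
least-squares coefficient of the within-transformed static regression satisfies
`(Σ_{t=1}^{T} Cov(D̃_t, Y_t)) / (Σ_{t=1}^{T} Var(D̃_t))`
`= τ₀ − (ρ₁₀·τ₀/(T·(T-1)))·Σ_{t=1}^{T} Σ_{s=1}^{t-1} ρ₁₀^{t-s-1}`,
the probability limit of the OLS treatment-effect estimator in the static model omitting the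
lagged outcome. -/
theorem dynamic_bias {Ω : Type*} [MeasurableSpace Ω]
    (μ : Measure Ω) [IsProbabilityMeasure μ] (T : ℕ) (hT : 2 ≤ T)
    (τ₀ ρ₁₀ a c Y₀ σ2 : ℝ) (hσ2 : 0 < σ2)
    (ε u : ℕ → Ω → ℝ)
    (hεmeas : ∀ t, Measurable (ε t)) (humeas : ∀ t, Measurable (u t))
    (hεL2 : ∀ t : ℕ, 1 ≤ t → t ≤ T → MemLp (ε t) 2 μ)
    (huL2 : ∀ t : ℕ, 1 ≤ t → t ≤ T → MemLp (u t) 2 μ)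
    (hindep : iIndepFun
      (Sum.elim (fun t : Fin T => ε (t + 1)) (fun t : Fin T => u (t + 1))) μ)
    (hεmean : ∀ t : ℕ, 1 ≤ t → t ≤ T → ∫ ω, ε t ω ∂μ = 0)
    (humean : ∀ t : ℕ, 1 ≤ t → t ≤ T → ∫ ω, u t ω ∂μ = 0)
    (huvar : ∀ t : ℕ, 1 ≤ t → t ≤ T → ∫ ω, (u t ω) ^ 2 ∂μ = σ2)
    (Y D : ℕ → Ω → ℝ) (hY0 : ∀ ω, Y 0 ω = Y₀)
    (hD : ∀ t : ℕ, 1 ≤ t → t ≤ T → ∀ ω, D t ω = c + u t ω)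
    (hY : ∀ t : ℕ, 1 ≤ t → t ≤ T → ∀ ω,
      Y t ω = a + τ₀ * D t ω + ρ₁₀ * Y (t - 1) ω + ε t ω) :
    (∑ t ∈ Icc 1 T,
        cov μ (fun ω => D t ω - (1 / (T : ℝ)) * ∑ s ∈ Icc 1 T, D s ω) (Y t))
      / (∑ t ∈ Icc 1 T,
          var μ (fun ω => D t ω - (1 / (T : ℝ)) * ∑ s ∈ Icc 1 T, D s ω))
    = τ₀ - (ρ₁₀ * τ₀ / ((T : ℝ) * ((T : ℝ) - 1)))
        * ∑ t ∈ Icc 1 T, ∑ s ∈ Icc 1 (t - 1), ρ₁₀ ^ (t - s - 1) := by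
  have hTn : (2:ℝ) ≤ (T:ℝ) := by exact_mod_cast hT
  have hn0 : (T:ℝ) ≠ 0 := by linarith
  have hn1 : (T:ℝ) - 1 ≠ 0 := by linarith
  set XF : ℕ → Ω → ℝ := fun t ω => u t ω - (1 / (T : ℝ)) * ∑ s ∈ Icc 1 T, u s ω with hXFdef
  set ZF : ℕ → Ω → ℝ :=
    fun t ω => ∑ s ∈ Icc 1 t, ρ₁₀ ^ (t - s) * (τ₀ * u s ω + ε s ω) with hZFdef
  -- D̃ equals XF
  have hDX : ∀ t, 1 ≤ t → t ≤ T →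
      (fun ω => D t ω - (1 / (T : ℝ)) * ∑ s ∈ Icc 1 T, D s ω) = XF t := by
    intro t h1 h2
    funext ω
    have hc : ∀ s ∈ Icc 1 T, D s ω = c + u s ω := fun s hs =>
      hD s (mem_Icc.mp hs).1 (mem_Icc.mp hs).2 ω
    rw [hD t h1 h2 ω, Finset.sum_congr rfl hc, Finset.sum_add_distrib, Finset.sum_const,
      Nat.card_Icc, Nat.add_sub_cancel, nsmul_eq_mul]
    simp only [hXFdef]
    field_simp
    ring
  -- independence facts
  have huu_indep : ∀ s t, 1 ≤ s → s ≤ T → 1 ≤ t → t ≤ T → s ≠ t →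
      IndepFun (u s) (u t) μ := by
    intro s t hs1 hs2 ht1 ht2 hst
    have h := hindep.indepFun (i := Sum.inr ⟨s-1, by omega⟩) (j := Sum.inr ⟨t-1, by omega⟩)
      (by simp only [ne_eq, Sum.inr.injEq, Fin.mk.injEq]; omega)
    simpa [show s-1+1 = s by omega, show t-1+1 = t by omega] using h
  have huε_indep : ∀ s t, 1 ≤ s → s ≤ T → 1 ≤ t → t ≤ T →
      IndepFun (u s) (ε t) μ := by
    intro s t hs1 hs2 ht1 ht2
    have h := hindep.indepFun (i := Sum.inr ⟨s-1, by omega⟩) (j := Sum.inl ⟨t-1, by omega⟩)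
      (by simp)
    simpa [show s-1+1 = s by omega, show t-1+1 = t by omega] using h
  have hu_int : ∀ t, 1 ≤ t → t ≤ T → Integrable (u t) μ := fun t h1 h2 =>
    (huL2 t h1 h2).integrable one_le_two
  have hε_int : ∀ t, 1 ≤ t → t ≤ T → Integrable (ε t) μ := fun t h1 h2 =>
    (hεL2 t h1 h2).integrable one_le_two
  -- second moments
  have Muu : ∀ s t, 1 ≤ s → s ≤ T → 1 ≤ t → t ≤ T →
      ∫ ω, u s ω * u t ω ∂μ = if s = t then σ2 else 0 := by
    intro s t hs1 hs2 ht1 ht2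
    by_cases h : s = t
    · subst h
      rw [if_pos rfl]
      have := huvar s hs1 hs2
      simpa [sq] using this
    · rw [if_neg h]
      have hi := (huu_indep s t hs1 hs2 ht1 ht2 h).integral_mul_eq_mul_integral
        (hu_int s hs1 hs2).aestronglyMeasurable (hu_int t ht1 ht2).aestronglyMeasurable
      rw [show (fun ω => u s ω * u t ω) = u s * u t from rfl, hi,
        humean s hs1 hs2, humean t ht1 ht2, mul_zero]
  have Muε : ∀ s t, 1 ≤ s → s ≤ T → 1 ≤ t → t ≤ T →
      ∫ ω, u s ω * ε t ω ∂μ = 0 := by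
    intro s t hs1 hs2 ht1 ht2
    have hi := (huε_indep s t hs1 hs2 ht1 ht2).integral_mul_eq_mul_integral
      (hu_int s hs1 hs2).aestronglyMeasurable (hε_int t ht1 ht2).aestronglyMeasurable
    rw [show (fun ω => u s ω * ε t ω) = u s * ε t from rfl, hi,
      humean s hs1 hs2, hεmean t ht1 ht2, mul_zero]
  -- XF properties
  have hsumL2 : MemLp (fun ω => ∑ s ∈ Icc 1 T, u s ω) 2 μ :=
    memLp_finset_sum _ (fun s hs => huL2 s (mem_Icc.mp hs).1 (mem_Icc.mp hs).2)
  have hXL2 : ∀ t, 1 ≤ t → t ≤ T → MemLp (XF t) 2 μ := fun t h1 h2 =>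
    (huL2 t h1 h2).sub (hsumL2.const_mul _)
  have hsum_int : Integrable (fun ω => ∑ s ∈ Icc 1 T, u s ω) μ :=
    integrable_finset_sum _ (fun s hs => hu_int s (mem_Icc.mp hs).1 (mem_Icc.mp hs).2)
  have hXmean : ∀ t, 1 ≤ t → t ≤ T → ∫ ω, XF t ω ∂μ = 0 := by
    intro t h1 h2
    simp only [hXFdef]
    rw [integral_sub (hu_int t h1 h2) (hsum_int.const_mul _), integral_const_mul,
      integral_finset_sum _ (fun s hs => hu_int s (mem_Icc.mp hs).1 (mem_Icc.mp hs).2),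
      Finset.sum_congr rfl (fun s hs => humean s (mem_Icc.mp hs).1 (mem_Icc.mp hs).2),
      Finset.sum_const, humean t h1 h2]
    simp
  have hXuu : ∀ t r, 1 ≤ t → t ≤ T → 1 ≤ r → r ≤ T →
      ∫ ω, XF t ω * u r ω ∂μ = (if t = r then σ2 else 0) - 1 / (T:ℝ) * σ2 := by
    intro t r ht1 ht2 hr1 hr2
    have expand : ∀ ω, XF t ω * u r ω
        = u t ω * u r ω - (1/(T:ℝ)) * ∑ s ∈ Icc 1 T, u s ω * u r ω := by
      intro ω
      simp only [hXFdef]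
      rw [sub_mul, mul_assoc, Finset.sum_mul]
    simp_rw [expand]
    rw [integral_sub (l2_mul_int (huL2 t ht1 ht2) (huL2 r hr1 hr2))
        ((integrable_finset_sum _ (fun s hs =>
          l2_mul_int (huL2 s (mem_Icc.mp hs).1 (mem_Icc.mp hs).2) (huL2 r hr1 hr2))).const_mul _),
      integral_const_mul,
      integral_finset_sum _ (fun s hs =>
        l2_mul_int (huL2 s (mem_Icc.mp hs).1 (mem_Icc.mp hs).2) (huL2 r hr1 hr2)),
      Finset.sum_congr rfl (fun s hs =>
        Muu s r (mem_Icc.mp hs).1 (mem_Icc.mp hs).2 hr1 hr2),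
      Finset.sum_ite_eq' (Icc 1 T) r (fun _ => σ2), if_pos (mem_Icc.mpr ⟨hr1, hr2⟩),
      Muu t r ht1 ht2 hr1 hr2]
  have hXε : ∀ t r, 1 ≤ t → t ≤ T → 1 ≤ r → r ≤ T →
      ∫ ω, XF t ω * ε r ω ∂μ = 0 := by
    intro t r ht1 ht2 hr1 hr2
    have expand : ∀ ω, XF t ω * ε r ω
        = u t ω * ε r ω - (1/(T:ℝ)) * ∑ s ∈ Icc 1 T, u s ω * ε r ω := by
      intro ω
      simp only [hXFdef]
      rw [sub_mul, mul_assoc, Finset.sum_mul]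
    simp_rw [expand]
    rw [integral_sub (l2_mul_int (huL2 t ht1 ht2) (hεL2 r hr1 hr2))
        ((integrable_finset_sum _ (fun s hs =>
          l2_mul_int (huL2 s (mem_Icc.mp hs).1 (mem_Icc.mp hs).2) (hεL2 r hr1 hr2))).const_mul _),
      integral_const_mul,
      integral_finset_sum _ (fun s hs =>
        l2_mul_int (huL2 s (mem_Icc.mp hs).1 (mem_Icc.mp hs).2) (hεL2 r hr1 hr2)),
      Finset.sum_congr rfl (fun s hs =>
        Muε s r (mem_Icc.mp hs).1 (mem_Icc.mp hs).2 hr1 hr2),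
      Muε t r ht1 ht2 hr1 hr2, Finset.sum_const]
    simp
  -- decomposition of Y
  have hYdec : ∀ t, t ≤ T → ∃ A : ℝ, ∀ ω, Y t ω = A + ZF t ω := by
    intro t
    induction t with
    | zero =>
      intro _
      exact ⟨Y₀, fun ω => by simp [hZFdef, hY0 ω]⟩
    | succ t ih =>
      intro h
      obtain ⟨A, hA⟩ := ih (by omega)
      refine ⟨a + τ₀ * c + ρ₁₀ * A, fun ω => ?_⟩
      have hz : ZF (t+1) ω = ρ₁₀ * ZF t ω + (τ₀ * u (t+1) ω + ε (t+1) ω) := by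
        simp only [hZFdef]
        rw [Finset.sum_Icc_succ_top (by omega), Finset.mul_sum]
        congr 1
        · refine Finset.sum_congr rfl fun s hs => ?_
          have hs' : s ≤ t := (mem_Icc.mp hs).2
          rw [show t + 1 - s = (t - s) + 1 by omega, pow_succ]
          ring
        · simp
      rw [hY (t+1) (by omega) h ω, hD (t+1) (by omega) h ω,
        show t + 1 - 1 = t from rfl, hA ω, hz]
      ring
  have hZL2 : ∀ t, t ≤ T → MemLp (ZF t) 2 μ := by
    intro t ht
    refine memLp_finset_sum _ (fun s hs => ?_)
    have h1 := (mem_Icc.mp hs).1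
    have h2 : s ≤ T := le_trans (mem_Icc.mp hs).2 ht
    exact (((huL2 s h1 h2).const_mul τ₀).add (hεL2 s h1 h2)).const_mul _
  -- covariance computation
  have hcov : ∀ t, 1 ≤ t → t ≤ T →
      cov μ (fun ω => D t ω - (1 / (T : ℝ)) * ∑ s ∈ Icc 1 T, D s ω) (Y t)
        = τ₀ * σ2 * (1 - 1/(T:ℝ)) - (τ₀ * σ2 / (T:ℝ)) * ∑ s ∈ Icc 1 (t-1), ρ₁₀ ^ (t-s) := by
    intro t h1 h2
    rw [hDX t h1 h2]
    obtain ⟨A, hA⟩ := hYdec t h2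
    rw [show Y t = fun ω => A + ZF t ω from funext hA,
      cov_const_add μ A ((hZL2 t h2).integrable one_le_two),
      cov_eq_integral μ (hXL2 t h1 h2) (hZL2 t h2) (hXmean t h1 h2)]
    have hexp : ∀ ω, XF t ω * ZF t ω
        = ∑ s ∈ Icc 1 t, ρ₁₀ ^ (t-s) * (τ₀ * (XF t ω * u s ω) + XF t ω * ε s ω) := by
      intro ω
      simp only [hZFdef]
      rw [Finset.mul_sum]
      exact Finset.sum_congr rfl fun s _ => by ring
    simp_rw [hexp]
    have hint : ∀ s ∈ Icc 1 t, Integrable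
        (fun ω => ρ₁₀ ^ (t-s) * (τ₀ * (XF t ω * u s ω) + XF t ω * ε s ω)) μ := by
      intro s hs
      have hs1 := (mem_Icc.mp hs).1
      have hs2 : s ≤ T := le_trans (mem_Icc.mp hs).2 h2
      exact (((l2_mul_int (hXL2 t h1 h2) (huL2 s hs1 hs2)).const_mul τ₀).add
        (l2_mul_int (hXL2 t h1 h2) (hεL2 s hs1 hs2))).const_mul _
    rw [integral_finset_sum _ hint]
    have hterm : ∀ s ∈ Icc 1 t,
        ∫ ω, ρ₁₀ ^ (t-s) * (τ₀ * (XF t ω * u s ω) + XF t ω * ε s ω) ∂μ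
          = ρ₁₀ ^ (t-s) * (τ₀ * ((if t = s then σ2 else 0) - 1/(T:ℝ)*σ2)) := by
      intro s hs
      have hs1 := (mem_Icc.mp hs).1
      have hs2 : s ≤ T := le_trans (mem_Icc.mp hs).2 h2
      rw [integral_const_mul,
        integral_add ((l2_mul_int (hXL2 t h1 h2) (huL2 s hs1 hs2)).const_mul τ₀)
          (l2_mul_int (hXL2 t h1 h2) (hεL2 s hs1 hs2)),
        integral_const_mul, hXuu t s h1 h2 hs1 hs2, hXε t s h1 h2 hs1 hs2, add_zero]
    rw [Finset.sum_congr rfl hterm]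
    have ht' : t - 1 + 1 = t := by omega
    rw [show Icc 1 t = Icc 1 (t-1+1) from by rw [ht'], Finset.sum_Icc_succ_top (by omega), ht']
    have hsum : ∑ s ∈ Icc 1 (t-1), ρ₁₀ ^ (t-s) * (τ₀ * ((if t = s then σ2 else 0) - 1/(T:ℝ)*σ2))
        = (-(τ₀ * σ2 / (T:ℝ))) * ∑ s ∈ Icc 1 (t-1), ρ₁₀ ^ (t-s) := by
      rw [Finset.mul_sum]
      refine Finset.sum_congr rfl fun s hs => ?_
      rw [if_neg (by have := mem_Icc.mp hs; omega)]
      ring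
    rw [hsum, Nat.sub_self, pow_zero, if_pos rfl]
    field_simp
    ring
  -- variance computation
  have hvar : ∀ t, 1 ≤ t → t ≤ T →
      var μ (fun ω => D t ω - (1 / (T : ℝ)) * ∑ s ∈ Icc 1 T, D s ω)
        = σ2 * (1 - 1/(T:ℝ)) := by
    intro t h1 h2
    rw [hDX t h1 h2]
    unfold var
    rw [cov_eq_integral μ (hXL2 t h1 h2) (hXL2 t h1 h2) (hXmean t h1 h2)]
    have expand : ∀ ω, XF t ω * XF t ω
        = XF t ω * u t ω - (1/(T:ℝ)) * ∑ s ∈ Icc 1 T, XF t ω * u s ω := by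
      intro ω
      conv_lhs => rw [hXFdef]
      simp only
      rw [mul_sub, mul_comm (XF t ω), ← mul_assoc, mul_comm _ (1/(T:ℝ)), mul_assoc,
        Finset.mul_sum]
    simp_rw [expand]
    rw [integral_sub (l2_mul_int (hXL2 t h1 h2) (huL2 t h1 h2))
        ((integrable_finset_sum _ (fun s hs =>
          l2_mul_int (hXL2 t h1 h2) (huL2 s (mem_Icc.mp hs).1 (mem_Icc.mp hs).2))).const_mul _),
      integral_const_mul,
      integral_finset_sum _ (fun s hs =>
        l2_mul_int (hXL2 t h1 h2) (huL2 s (mem_Icc.mp hs).1 (mem_Icc.mp hs).2)),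
      Finset.sum_congr rfl (fun s hs =>
        hXuu t s h1 h2 (mem_Icc.mp hs).1 (mem_Icc.mp hs).2),
      hXuu t t h1 h2 h1 h2, if_pos rfl,
      Finset.sum_sub_distrib, Finset.sum_ite_eq (Icc 1 T) t (fun _ => σ2),
      if_pos (mem_Icc.mpr ⟨h1, h2⟩), Finset.sum_const, Nat.card_Icc, Nat.add_sub_cancel,
      nsmul_eq_mul]
    field_simp
    ring
  -- assemble
  rw [Finset.sum_congr rfl (fun t ht => hcov t (mem_Icc.mp ht).1 (mem_Icc.mp ht).2),
    Finset.sum_congr rfl (fun t ht => hvar t (mem_Icc.mp ht).1 (mem_Icc.mp ht).2),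
    Finset.sum_const, Nat.card_Icc, Nat.add_sub_cancel, nsmul_eq_mul]
  have hrew : ∀ t ∈ Icc 1 T, ∑ s ∈ Icc 1 (t-1), ρ₁₀ ^ (t-s)
      = ρ₁₀ * ∑ s ∈ Icc 1 (t-1), ρ₁₀ ^ (t-s-1) := by
    intro t ht
    rw [Finset.mul_sum]
    refine Finset.sum_congr rfl fun s hs => ?_
    have h1 := mem_Icc.mp hs
    have h2 := mem_Icc.mp ht
    conv_lhs => rw [show t - s = (t - s - 1) + 1 by omega]
    rw [pow_succ]
    ring
  rw [Finset.sum_sub_distrib, Finset.sum_const, Nat.card_Icc, Nat.add_sub_cancel, nsmul_eq_mul,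
    ← Finset.mul_sum, Finset.sum_congr rfl hrew, ← Finset.mul_sum]
  field_simp
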